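/- Let (A, μ, α) be a multiplicative Hom-algebra over a field k of characteristic 0 that is up to (n−1)-st Hom-power associative for some n ≥ 4. Then for all x ∈ A and all λ ∈ {1,...,n−1}, the elements α^{λ−1}(x^{n−λ}) and α^{n−λ−1}(x^{λ}) commute: α^{λ−1}(x^{n−λ})·α^{n−λ−1}(x^{λ}) = α^{n−λ−1}(x^{λ})·α^{λ−1}(x^{n−λ}). -/

import Mathlib

set_option linter.unusedSectionVars false

variable {k A : Type*} [Field k] [CharZero k] [AddCommGroup A] [Module k A]

/-- The `n`-th Hom-power: `x^1 = x`, `x^n = x^{n-1} · α^{n-2}(x)`. -/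
def homPow (μ : A →ₗ[k] A →ₗ[k] A) (α : A →ₗ[k] A) (x : A) : ℕ → A
  | 0 => x
  | 1 => x
  | n + 2 => μ (homPow μ α x (n + 1)) ((α ^ n) x)

/-- `A` is `n`-th Hom-power associative. -/
def IsNthHomPowerAssoc (μ : A →ₗ[k] A →ₗ[k] A) (α : A →ₗ[k] A) (n : ℕ) : Prop :=
  ∀ (x : A) (i : ℕ), 1 ≤ i → i ≤ n - 1 →
    homPow μ α x n =
      μ ((α ^ (n - i - 1)) (homPow μ α x i)) ((α ^ (i - 1)) (homPow μ α x (n - i)))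

/-- `A` is Hom-power associative. -/
def IsHomPowerAssoc (μ : A →ₗ[k] A →ₗ[k] A) (α : A →ₗ[k] A) : Prop :=
  ∀ n : ℕ, 2 ≤ n → IsNthHomPowerAssoc μ α n

/-- `A` is up to `n`-th Hom-power associative. -/
def IsUpToNthHomPowerAssoc (μ : A →ₗ[k] A →ₗ[k] A) (α : A →ₗ[k] A) (n : ℕ) : Prop :=
  ∀ m : ℕ, 2 ≤ m → m ≤ n → IsNthHomPowerAssoc μ α m

/-- The Hom-algebra `(A, μ, α)` is multiplicative. -/
def IsMultiplicative (μ : A →ₗ[k] A →ₗ[k] A) (α : A →ₗ[k] A) : Prop :=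
  ∀ x y : A, α (μ x y) = μ (α x) (α y)

section aux
variable (μ : A →ₗ[k] A →ₗ[k] A) (α : A →ₗ[k] A)

lemma aux_comp (a b : ℕ) (y : A) : (α ^ a) ((α ^ b) y) = (α ^ (a + b)) y := by
  rw [pow_add, Module.End.mul_apply]

lemma aux_step (b : ℕ) (y : A) : α ((α ^ b) y) = (α ^ (b + 1)) y := by
  rw [pow_succ', Module.End.mul_apply]

lemma aux_multpow (hmul : IsMultiplicative μ α) (s : ℕ) :
    ∀ u v : A, (α ^ s) (μ u v) = μ ((α ^ s) u) ((α ^ s) v) := by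
  induction s with
  | zero => simp
  | succ t ih =>
    intro u v
    have e : ∀ y : A, (α ^ (t + 1)) y = (α ^ t) (α y) := fun y => by
      rw [pow_succ, Module.End.mul_apply]
    rw [e, e, e, hmul, ih]

lemma aux_L3 (hmul : IsMultiplicative μ α) (n : ℕ)
    (hpa : IsUpToNthHomPowerAssoc μ α (n - 1)) (y : A) (p q s : ℕ)
    (hp : 1 ≤ p) (hq : 1 ≤ q) (hpq : p + q ≤ n - 1) :
    μ ((α ^ (q - 1 + s)) (homPow μ α y p)) ((α ^ (p - 1 + s)) (homPow μ α y q))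
      = (α ^ s) (homPow μ α y (p + q)) := by
  have h := hpa (p + q) (by omega) hpq y p hp (by omega)
  rw [show p + q - p = q by omega] at h
  rw [h, aux_multpow μ α hmul, aux_comp, aux_comp,
    show s + (q - 1) = q - 1 + s by omega, show s + (p - 1) = p - 1 + s by omega]

lemma aux_lin (h3 : ∀ y : A, μ (μ y y) (α y) = μ (α y) (μ y y)) (a b c : A) :
    μ (μ a b) (α c) + μ (μ b a) (α c) + μ (μ a c) (α b) + μ (μ c a) (α b) +
      μ (μ b c) (α a) + μ (μ c b) (α a)
    = μ (α a) (μ b c) + μ (α a) (μ c b) + μ (α b) (μ a c) + μ (α b) (μ c a) +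
      μ (α c) (μ a b) + μ (α c) (μ b a) := by
  have eL : μ (μ a b) (α c) + μ (μ b a) (α c) + μ (μ a c) (α b) + μ (μ c a) (α b) +
      μ (μ b c) (α a) + μ (μ c b) (α a)
      = μ (μ (a + b + c) (a + b + c)) (α (a + b + c)) - μ (μ (a + b) (a + b)) (α (a + b))
        - μ (μ (a + c) (a + c)) (α (a + c)) - μ (μ (b + c) (b + c)) (α (b + c))
        + μ (μ a a) (α a) + μ (μ b b) (α b) + μ (μ c c) (α c) := by
    simp only [map_add, LinearMap.add_apply]
    abel
  have eR : μ (α a) (μ b c) + μ (α a) (μ c b) + μ (α b) (μ a c) + μ (α b) (μ c a) +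
      μ (α c) (μ a b) + μ (α c) (μ b a)
      = μ (α (a + b + c)) (μ (a + b + c) (a + b + c)) - μ (α (a + b)) (μ (a + b) (a + b))
        - μ (α (a + c)) (μ (a + c) (a + c)) - μ (α (b + c)) (μ (b + c) (b + c))
        + μ (α a) (μ a a) + μ (α b) (μ b b) + μ (α c) (μ c c) := by
    simp only [map_add, LinearMap.add_apply]
    abel
  rw [eL, eR]
  simp only [h3]

end aux

lemma add_self_cancel (K : Type*) {M : Type*} [Field K] [CharZero K] [AddCommGroup M]
    [Module K M] {x y : M} (h : x + x = y + y) : x = y := by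
  have h2 : (2 : K) • x = (2 : K) • y := by rw [two_smul, two_smul]; exact h
  have h3 := congrArg (fun z => (2 : K)⁻¹ • z) h2
  simpa [smul_smul] using h3

lemma double_cancel (K : Type*) {M : Type*} [Field K] [CharZero K] [AddCommGroup M]
    [Module K M] {x1 x2 x3 y1 y2 y3 : M}
    (h : x1 + x1 + x2 + x2 + x3 + x3 = y1 + y1 + y2 + y2 + y3 + y3) :
    x1 + x2 + x3 = y1 + y2 + y3 := by
  apply add_self_cancel K
  calc x1 + x2 + x3 + (x1 + x2 + x3) = x1 + x1 + x2 + x2 + x3 + x3 := by abel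
    _ = y1 + y1 + y2 + y2 + y3 + y3 := h
    _ = y1 + y2 + y3 + (y1 + y2 + y3) := by abel

theorem stmt8 (μ : A →ₗ[k] A →ₗ[k] A) (α : A →ₗ[k] A) (n : ℕ) (hn : 4 ≤ n)
    (hmul : IsMultiplicative μ α)
    (hpa : IsUpToNthHomPowerAssoc μ α (n - 1)) :
    ∀ (x : A) (l : ℕ), 1 ≤ l → l ≤ n - 1 →
      μ ((α ^ (l - 1)) (homPow μ α x (n - l))) ((α ^ (n - l - 1)) (homPow μ α x l)) =
        μ ((α ^ (n - l - 1)) (homPow μ α x l)) ((α ^ (l - 1)) (homPow μ α x (n - l))) := by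
  intro x l hl1 hl2
  -- third Hom-power associativity
  have h3 : ∀ y : A, μ (μ y y) (α y) = μ (α y) (μ y y) := by
    intro y
    have h := hpa 3 (by omega) (by omega) y 1 le_rfl (by norm_num)
    rw [show (3 : ℕ) - 1 - 1 = 1 by norm_num, show (1 : ℕ) - 1 = 0 by norm_num,
      show (3 : ℕ) - 1 = 2 by norm_num] at h
    have e3 : homPow μ α y 3 = μ (homPow μ α y 2) ((α ^ 1) y) := rfl
    have e2 : homPow μ α y 2 = μ (homPow μ α y 1) ((α ^ 0) y) := rfl
    have e1 : homPow μ α y 1 = y := rfl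
    rw [e3, e2, e1] at h
    simp only [pow_zero, pow_one, Module.End.one_apply] at h
    exact h
  set u : ℕ → A := fun m =>
    μ ((α ^ (n - m - 1)) (homPow μ α x m)) ((α ^ (m - 1)) (homPow μ α x (n - m))) with hu
  -- the key recurrence
  have step : ∀ i, 1 ≤ i → i ≤ n - 2 →
      u (i + 1) + u (n - 1) + u (n - i) = u i + u 1 + u (n - (i + 1)) := by
    intro i hi1 hi2
    set K := n - 1 - i with hK
    have hK1 : 1 ≤ K := by omega
    have lin := aux_lin μ α h3 ((α ^ (n - i - 2)) (homPow μ α x i))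
      ((α ^ (n - 3)) (homPow μ α x 1)) ((α ^ (n - K - 2)) (homPow μ α x K))
    have hab := aux_L3 μ α hmul n hpa x i 1 (K - 1) hi1 le_rfl (by omega)
    rw [show 1 - 1 + (K - 1) = n - i - 2 by omega, show i - 1 + (K - 1) = n - 3 by omega] at hab
    have hba := aux_L3 μ α hmul n hpa x 1 i (K - 1) le_rfl hi1 (by omega)
    rw [show i - 1 + (K - 1) = n - 3 by omega, show 1 - 1 + (K - 1) = n - i - 2 by omega,
      show 1 + i = i + 1 by omega] at hba
    have hac := aux_L3 μ α hmul n hpa x i K 0 hi1 hK1 (by omega)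
    rw [show K - 1 + 0 = n - i - 2 by omega, show i - 1 + 0 = n - K - 2 by omega,
      show i + K = n - 1 by omega, pow_zero, Module.End.one_apply] at hac
    have hca := aux_L3 μ α hmul n hpa x K i 0 hK1 hi1 (by omega)
    rw [show i - 1 + 0 = n - K - 2 by omega, show K - 1 + 0 = n - i - 2 by omega,
      show K + i = n - 1 by omega, pow_zero, Module.End.one_apply] at hca
    have hbc := aux_L3 μ α hmul n hpa x 1 K (i - 1) le_rfl hK1 (by omega)
    rw [show K - 1 + (i - 1) = n - 3 by omega, show 1 - 1 + (i - 1) = n - K - 2 by omega,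
      show 1 + K = n - i by omega] at hbc
    have hcb := aux_L3 μ α hmul n hpa x K 1 (i - 1) hK1 le_rfl (by omega)
    rw [show 1 - 1 + (i - 1) = n - K - 2 by omega, show K - 1 + (i - 1) = n - 3 by omega,
      show K + 1 = n - i by omega] at hcb
    have sa : α ((α ^ (n - i - 2)) (homPow μ α x i)) = (α ^ (n - i - 1)) (homPow μ α x i) := by
      rw [aux_step, show n - i - 2 + 1 = n - i - 1 by omega]
    have sb : α ((α ^ (n - 3)) (homPow μ α x 1)) = (α ^ (n - 2)) (homPow μ α x 1) := by
      rw [aux_step, show n - 3 + 1 = n - 2 by omega]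
    have sc : α ((α ^ (n - K - 2)) (homPow μ α x K)) = (α ^ (n - K - 1)) (homPow μ α x K) := by
      rw [aux_step, show n - K - 2 + 1 = n - K - 1 by omega]
    rw [hab, hba, hac, hca, hbc, hcb, sa, sb, sc] at lin
    -- identify the six u-values
    have hU1 : u (i + 1)
        = μ ((α ^ (K - 1)) (homPow μ α x (i + 1))) ((α ^ (n - K - 1)) (homPow μ α x K)) := by
      simp only [hu]
      rw [show n - (i + 1) - 1 = K - 1 by omega, show i + 1 - 1 = n - K - 1 by omega,
        show n - (i + 1) = K by omega]
    have hU2 : u (n - 1)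
        = μ (homPow μ α x (n - 1)) ((α ^ (n - 2)) (homPow μ α x 1)) := by
      simp only [hu]
      rw [show n - (n - 1) - 1 = 0 by omega, show n - 1 - 1 = n - 2 by omega,
        show n - (n - 1) = 1 by omega, pow_zero, Module.End.one_apply]
    have hU3 : u (n - i)
        = μ ((α ^ (i - 1)) (homPow μ α x (n - i))) ((α ^ (n - i - 1)) (homPow μ α x i)) := by
      simp only [hu]
      rw [show n - (n - i) - 1 = i - 1 by omega, show n - (n - i) = i by omega]
    have hV1 : u i
        = μ ((α ^ (n - i - 1)) (homPow μ α x i)) ((α ^ (i - 1)) (homPow μ α x (n - i))) := by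
      simp only [hu]
    have hV2 : u 1
        = μ ((α ^ (n - 2)) (homPow μ α x 1)) (homPow μ α x (n - 1)) := by
      simp only [hu]
      rw [show n - 1 - 1 = n - 2 by omega, show (1 : ℕ) - 1 = 0 by omega, pow_zero,
        Module.End.one_apply]
    have hV3 : u (n - (i + 1))
        = μ ((α ^ (n - K - 1)) (homPow μ α x K)) ((α ^ (K - 1)) (homPow μ α x (i + 1))) := by
      simp only [hu]
      rw [show n - (i + 1) = K by omega, show n - K - 1 = n - K - 1 from rfl,
        show n - K = i + 1 by omega]
    rw [hU1, hU2, hU3, hV1, hV2, hV3]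
    exact double_cancel k lin
  -- telescoping
  have tele : ∀ j, j ≤ n - 2 →
      u (1 + j) - u (n - (1 + j)) + j • (u (n - 1) - u 1) = u 1 - u (n - 1) := by
    intro j
    induction j with
    | zero =>
      intro _
      rw [show n - (1 + 0) = n - 1 by omega, show (1 : ℕ) + 0 = 1 by omega, zero_nsmul, add_zero]
    | succ j ih =>
      intro hj
      have hst := step (1 + j) (by omega) (by omega)
      have ih' := ih (by omega)
      rw [show 1 + (j + 1) = 1 + j + 1 by omega]
      calc u (1 + j + 1) - u (n - (1 + j + 1)) + (j + 1) • (u (n - 1) - u 1)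
          = (u (1 + j + 1) + u (n - 1) + u (n - (1 + j)))
              + (j + 1) • (u (n - 1) - u 1)
              - u (n - (1 + j + 1)) - u (n - 1) - u (n - (1 + j)) := by abel
        _ = (u (1 + j) + u 1 + u (n - (1 + j + 1)))
              + (j + 1) • (u (n - 1) - u 1)
              - u (n - (1 + j + 1)) - u (n - 1) - u (n - (1 + j)) := by rw [hst]
        _ = u (1 + j) - u (n - (1 + j)) + j • (u (n - 1) - u 1) := by
              rw [succ_nsmul]; abel
        _ = u 1 - u (n - 1) := ih'
  have hlast := tele (n - 2) le_rfl
  rw [show 1 + (n - 2) = n - 1 by omega, show n - (n - 1) = 1 by omega] at hlast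
  have hnz : n • (u (n - 1) - u 1) = 0 := by
    calc n • (u (n - 1) - u 1)
        = (1 + (n - 2) + 1) • (u (n - 1) - u 1) :=
          congrArg (fun t : ℕ => t • (u (n - 1) - u 1)) (by omega)
      _ = (u (n - 1) - u 1 + (n - 2) • (u (n - 1) - u 1)) + (u (n - 1) - u 1) := by
          rw [add_nsmul, add_nsmul, one_nsmul]
      _ = (u 1 - u (n - 1)) + (u (n - 1) - u 1) := by rw [hlast]
      _ = 0 := by abel
  have hz : u (n - 1) - u 1 = 0 := by
    have hc : (n : k) • (u (n - 1) - u 1) = 0 := by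
      rw [Nat.cast_smul_eq_nsmul]; exact hnz
    rcases smul_eq_zero.mp hc with h | h
    · exact absurd h (by exact_mod_cast (by omega : n ≠ 0))
    · exact h
  have key' : ∀ m, 1 ≤ m → m ≤ n - 1 → u m = u (n - m) := by
    intro m hm1 hm2
    have t := tele (m - 1) (by omega)
    rw [show 1 + (m - 1) = m by omega, hz, smul_zero, add_zero] at t
    have h0 : u 1 - u (n - 1) = 0 := by
      rw [sub_eq_zero] at hz ⊢; exact hz.symm
    rw [h0] at t
    exact sub_eq_zero.mp t
  have final := key' (n - l) (by omega) (by omega)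
  rw [show n - (n - l) = l by omega] at final
  simp only [hu] at final
  rw [show n - (n - l) = l by omega] at final
  exact final
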